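/- With A and a₁, a₂, a₃, a₄ as in the context, assume gcd(a₁, a₂, a₃, a₄) = 1. Then the numerical semigroup generated by a₁, a₂, a₃, a₄ is symmetric (i.e., the corresponding affine monomial curve is Gorenstein). -/

import Mathlib

def IsSymmetricNumericalSemigroup (S : AddSubmonoid ℕ) : Prop :=
  ∃ F : ℕ, F ∉ S ∧ (∀ m : ℕ, F < m → m ∈ S) ∧
    ∀ z : ℤ, (∃ s ∈ S, (s : ℤ) = z) ↔ ¬ ∃ s ∈ S, (s : ℤ) = (F : ℤ) - z

set_option linter.unusedVariables false
set_option maxHeartbeats 1600000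


def bA1 (e13 e14 e24 e32 e42 e43 : ℤ) : ℤ :=
  e13*e32*e14 + e13*e32*e24 + e14*e32*e43 + e14*e42*e13 + e14*e42*e43
def bA2 (e13 e14 e21 e24 e31 e43 : ℤ) : ℤ :=
  e21*e13*e14 + e21*e13*e24 + e21*e43*e14 + e21*e43*e24 + e24*e31*e43
def bA3 (e14 e21 e24 e31 e32 e42 : ℤ) : ℤ :=
  e21*e32*e14 + e21*e32*e24 + e32*e31*e14 + e32*e31*e24 + e42*e31*e14
def bA4 (e13 e21 e31 e32 e42 e43 : ℤ) : ℤ :=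
  e21*e32*e43 + e21*e13*e42 + e21*e43*e42 + e32*e31*e43 + e42*e31*e43

/-- membership in the fundamental domain -/
def memD (e13 e14 e24 e32 e42 e43 y2 y3 y4 : ℤ) : Prop :=
  0 ≤ y2 ∧ y2 < e32+e42 ∧ 0 ≤ y3 ∧ y3 < e13+e43 ∧ 0 ≤ y4 ∧ y4 < e14+e24 ∧
    (y4 < e14 ∨ (y2 < e32 ∧ y3 < e13))

/-- lattice equivalence (projected rows) -/
def LatE (e13 e14 e24 e32 e42 e43 x2 x3 x4 y2 y3 y4 : ℤ) : Prop :=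
  ∃ l2 l3 l4 : ℤ,
    y2 = x2 - l2*(e32+e42) + l3*e32 + l4*e42 ∧
    y3 = x3 - l3*(e13+e43) + l4*e43 ∧
    y4 = x4 + l2*e24 - l4*(e14+e24)

lemma latE_trans {e13 e14 e24 e32 e42 e43 x2 x3 x4 y2 y3 y4 z2 z3 z4 : ℤ}
    (h1 : LatE e13 e14 e24 e32 e42 e43 x2 x3 x4 y2 y3 y4)
    (h2 : LatE e13 e14 e24 e32 e42 e43 y2 y3 y4 z2 z3 z4) :
    LatE e13 e14 e24 e32 e42 e43 x2 x3 x4 z2 z3 z4 := by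
  obtain ⟨l2, l3, l4, e1, e2, e3⟩ := h1
  obtain ⟨m2, m3, m4, f1, f2, f3⟩ := h2
  exact ⟨l2+m2, l3+m3, l4+m4, by linear_combination f1 + e1, by linear_combination f2 + e2,
    by linear_combination f3 + e3⟩

lemma one_le_mul3 {a b c : ℤ} (ha : 1 ≤ a) (hb : 1 ≤ b) (hc : 1 ≤ c) : 1 ≤ a*b*c := by
  have h1 : 1 ≤ a*b := by nlinarith
  nlinarith

section pos
variable {e13 e14 e21 e24 e31 e32 e42 e43 : ℤ}
  (h13 : 1 ≤ e13) (h14 : 1 ≤ e14) (h21 : 1 ≤ e21) (h24 : 1 ≤ e24)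
  (h31 : 1 ≤ e31) (h32 : 1 ≤ e32) (h42 : 1 ≤ e42) (h43 : 1 ≤ e43)

include h13 h14 h24 h32 h42 h43 in
lemma bA1_big : e24 + 4 ≤ bA1 e13 e14 e24 e32 e42 e43 := by
  have t1 := one_le_mul3 h13 h32 h14
  have t3 := one_le_mul3 h14 h32 h43
  have t4 := one_le_mul3 h14 h42 h13
  have t5 := one_le_mul3 h14 h42 h43
  have h' : 1 ≤ e13*e32 := by nlinarith
  have t2 : 1*e24 ≤ (e13*e32)*e24 := mul_le_mul_of_nonneg_right h' (by linarith)
  simp only [bA1]; linarith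

include h13 h14 h21 h24 h31 h43 in
lemma bA2_pos : 5 ≤ bA2 e13 e14 e21 e24 e31 e43 := by
  have t1 := one_le_mul3 h21 h13 h14
  have t2 := one_le_mul3 h21 h13 h24
  have t3 := one_le_mul3 h21 h43 h14
  have t4 := one_le_mul3 h21 h43 h24
  have t5 := one_le_mul3 h24 h31 h43
  simp only [bA2]; linarith

include h14 h21 h24 h31 h32 h42 in
lemma bA3_pos : 5 ≤ bA3 e14 e21 e24 e31 e32 e42 := by
  have t1 := one_le_mul3 h21 h32 h14
  have t2 := one_le_mul3 h21 h32 h24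
  have t3 := one_le_mul3 h32 h31 h14
  have t4 := one_le_mul3 h32 h31 h24
  have t5 := one_le_mul3 h42 h31 h14
  simp only [bA3]; linarith

include h13 h21 h31 h32 h42 h43 in
lemma bA4_pos : 5 ≤ bA4 e13 e21 e31 e32 e42 e43 := by
  have t1 := one_le_mul3 h21 h32 h43
  have t2 := one_le_mul3 h21 h13 h42
  have t3 := one_le_mul3 h21 h43 h42
  have t4 := one_le_mul3 h32 h31 h43
  have t5 := one_le_mul3 h42 h31 h43
  simp only [bA4]; linarith
end pos


lemma minim (e13 e14 e24 e32 e42 e43 : ℤ)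
    (h13 : 1 ≤ e13) (h14 : 1 ≤ e14) (h24 : 1 ≤ e24) (h32 : 1 ≤ e32)
    (h42 : 1 ≤ e42) (h43 : 1 ≤ e43)
    (y2 y3 y4 l2 l3 l4 : ℤ)
    (hy2 : 0 ≤ y2) (hy2' : y2 < e32+e42) (hy3 : 0 ≤ y3) (hy3' : y3 < e13+e43)
    (hy4 : 0 ≤ y4) (hy4' : y4 < e14+e24)
    (hbox : y4 < e14 ∨ (y2 < e32 ∧ y3 < e13))
    (h2 : 0 ≤ y2 - l2*(e32+e42) + l3*e32 + l4*e42)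
    (h3 : 0 ≤ y3 - l3*(e13+e43) + l4*e43)
    (h4 : 0 ≤ y4 + l2*e24 - l4*(e14+e24)) :
    l2 ≤ 0 ∧ l3 ≤ 0 := by
  by_cases hl2 : l2 ≤ 0
  · have hl4 : l4 ≤ 0 := by
      by_contra h
      push_neg at h
      nlinarith [mul_nonpos_of_nonpos_of_nonneg hl2 (by linarith : (0:ℤ) ≤ e24),
        mul_le_mul_of_nonneg_right h (by linarith : (0:ℤ) ≤ e14+e24)]
    have hl3 : l3 ≤ 0 := by
      by_contra h
      push_neg at h
      nlinarith [mul_nonpos_of_nonpos_of_nonneg hl4 (by linarith : (0:ℤ) ≤ e43),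
        mul_le_mul_of_nonneg_right h (by linarith : (0:ℤ) ≤ e13+e43)]
    exact ⟨hl2, hl3⟩
  · exfalso
    push_neg at hl2
    have hl2' : 1 ≤ l2 := hl2
    rcases hbox with hb | ⟨hb2, hb3⟩
    · -- box 2 : y4 < e14
      have s1 : l4 ≤ l2 - 1 := by
        by_contra h
        push_neg at h
        have h' : l2 ≤ l4 := by omega
        nlinarith [mul_nonneg (by omega : (0:ℤ) ≤ l4 - l2) (by linarith : (0:ℤ) ≤ e24),
          mul_nonneg (by omega : (0:ℤ) ≤ l4 - 1) (by linarith : (0:ℤ) ≤ e14)]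
      have s2 : l3 ≤ l2 - 1 := by
        by_cases h0 : l3 ≤ 0
        · omega
        · push_neg at h0
          have s3 : l3 ≤ l4 := by
            by_contra h
            push_neg at h
            nlinarith [mul_nonneg (by omega : (0:ℤ) ≤ l3 - l4 - 1) (by linarith : (0:ℤ) ≤ e43),
              mul_nonneg (by omega : (0:ℤ) ≤ l3 - 1) (by linarith : (0:ℤ) ≤ e13)]
          omega
      nlinarith [mul_nonneg (by omega : (0:ℤ) ≤ l2 - 1 - l3) (by linarith : (0:ℤ) ≤ e32),
        mul_nonneg (by omega : (0:ℤ) ≤ l2 - 1 - l4) (by linarith : (0:ℤ) ≤ e42)]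
    · -- box 1 : y2 < e32, y3 < e13
      have s1 : l4 ≤ l2 := by
        by_contra h
        push_neg at h
        nlinarith [mul_nonneg (by omega : (0:ℤ) ≤ l4 - l2 - 1) (by linarith : (0:ℤ) ≤ e24),
          mul_nonneg (by omega : (0:ℤ) ≤ l4 - 1) (by linarith : (0:ℤ) ≤ e14)]
      by_cases h0 : l3 ≤ 0
      · nlinarith [mul_nonpos_of_nonpos_of_nonneg h0 (by linarith : (0:ℤ) ≤ e32),
          mul_nonneg (by omega : (0:ℤ) ≤ l2 - l4) (by linarith : (0:ℤ) ≤ e42),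
          mul_nonneg (by omega : (0:ℤ) ≤ l2 - 1) (by linarith : (0:ℤ) ≤ e32)]
      · push_neg at h0
        have s3 : l3 ≤ l4 - 1 := by
          by_contra h
          push_neg at h
          nlinarith [mul_nonneg (by omega : (0:ℤ) ≤ l3 - l4) (by linarith : (0:ℤ) ≤ e43),
            mul_nonneg (by omega : (0:ℤ) ≤ l3 - 1) (by linarith : (0:ℤ) ≤ e13)]
        nlinarith [mul_nonneg (by omega : (0:ℤ) ≤ l2 - 1 - l3) (by linarith : (0:ℤ) ≤ e32),
          mul_nonneg (by omega : (0:ℤ) ≤ l2 - l4) (by linarith : (0:ℤ) ≤ e42)]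

lemma satur (e13 e14 e21 e24 e31 e32 e42 e43 u1 u2 u3 u4 v1 v2 v3 v4 : ℤ)
    (hu : u1 * bA1 e13 e14 e24 e32 e42 e43 + u2 * bA2 e13 e14 e21 e24 e31 e43
        + u3 * bA3 e14 e21 e24 e31 e32 e42 + u4 * bA4 e13 e21 e31 e32 e42 e43 = 1)
    (hv : v1 * bA1 e13 e14 e24 e32 e42 e43 + v2 * bA2 e13 e14 e21 e24 e31 e43
        + v3 * bA3 e14 e21 e24 e31 e32 e42 + v4 * bA4 e13 e21 e31 e32 e42 e43 = 0) :
    ∃ l2 l3 l4 : ℤ,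
      v1 = l2*e21 + l3*e31 ∧
      v2 = -(l2*(e32+e42)) + l3*e32 + l4*e42 ∧
      v3 = -(l3*(e13+e43)) + l4*e43 ∧
      v4 = l2*e24 - l4*(e14+e24) := by
  refine ⟨u1 * (-e42*e43*v4 - e32*e43*v4 - e24*e43*v2 - e24*e32*v3 - e14*e43*v2 - e14*e32*v3 - e13*e42*v4 - e13*e24*v2 - e13*e14*v2) + u2 * (e31*e43*v4 + e24*e43*v1 + e24*e31*v3 + e14*e43*v1 + e14*e31*v3 + e13*e24*v1 + e13*e14*v1) + u3 * (-e31*e42*v4 + e24*e32*v1 - e24*e31*v2 + e14*e32*v1 - e14*e31*v2) + u4 * (e42*e43*v1 + e32*e43*v1 - e31*e43*v2 + e31*e42*v3 + e13*e42*v1),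
    u1 * (-e42*e43*v4 - e32*e43*v4 - e24*e43*v2 - e24*e32*v3 - e14*e42*v3 - e14*e32*v3) + u2 * (e24*e43*v1 - e21*e43*v4 - e21*e24*v3 - e14*e21*v3) + u3 * (e24*e32*v1 + e21*e42*v4 + e21*e24*v2 + e14*e42*v1 + e14*e32*v1 + e14*e21*v2) + u4 * (e42*e43*v1 + e32*e43*v1 + e21*e43*v2 - e21*e42*v3),
    u1 * (-e42*e43*v4 - e32*e43*v4 - e24*e43*v2 - e24*e32*v3 - e13*e42*v4 - e13*e32*v4 - e13*e24*v2) + u2 * (e24*e43*v1 + e24*e31*v3 - e21*e43*v4 + e13*e24*v1 - e13*e21*v4) + u3 * (-e31*e42*v4 - e31*e32*v4 + e24*e32*v1 - e24*e31*v2 - e21*e32*v4) + u4 * (e42*e43*v1 + e32*e43*v1 + e31*e42*v3 + e31*e32*v3 + e21*e43*v2 + e21*e32*v3 + e13*e42*v1 + e13*e32*v1 + e13*e21*v2),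
    ?_, ?_, ?_, ?_⟩
  · simp only [bA1, bA2, bA3, bA4] at hu hv ⊢
    linear_combination (-v1) * hu + u1 * hv
  · simp only [bA1, bA2, bA3, bA4] at hu hv ⊢
    linear_combination (-v2) * hu + u2 * hv
  · simp only [bA1, bA2, bA3, bA4] at hu hv ⊢
    linear_combination (-v3) * hu + u3 * hv
  · simp only [bA1, bA2, bA3, bA4] at hu hv ⊢
    linear_combination (-v4) * hu + u4 * hv

lemma descend (e13 e14 e21 e24 e31 e32 e42 e43 : ℤ)
    (h13 : 1 ≤ e13) (h14 : 1 ≤ e14) (h21 : 1 ≤ e21) (h24 : 1 ≤ e24)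
    (h31 : 1 ≤ e31) (h32 : 1 ≤ e32) (h42 : 1 ≤ e42) (h43 : 1 ≤ e43)
    (hA1big : e24 + 4 ≤ bA1 e13 e14 e24 e32 e42 e43)
    (hA2pos : 0 ≤ bA2 e13 e14 e21 e24 e31 e43)
    (hA3pos : 0 ≤ bA3 e14 e21 e24 e31 e32 e42)
    (hA4pos : 0 ≤ bA4 e13 e21 e31 e32 e42 e43) :
    ∀ n : ℕ, ∀ x2 x3 x4 : ℤ, 0 ≤ x2 → 0 ≤ x3 → 0 ≤ x4 →
    x2 * bA2 e13 e14 e21 e24 e31 e43 + x3 * bA3 e14 e21 e24 e31 e32 e42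
      + x4 * bA4 e13 e21 e31 e32 e42 e43 + x4 ≤ (n:ℤ) →
    ∃ y2 y3 y4 : ℤ, LatE e13 e14 e24 e32 e42 e43 x2 x3 x4 y2 y3 y4 ∧
      memD e13 e14 e24 e32 e42 e43 y2 y3 y4 := by
  have hA1nn : 0 ≤ bA1 e13 e14 e24 e32 e42 e43 := by linarith
  intro n
  induction n using Nat.strong_induction_on with
  | _ n ih =>
  intro x2 x3 x4 hx2 hx3 hx4 hm
  by_cases H2 : x2 < e32+e42
  · by_cases H3 : x3 < e13+e43
    · by_cases H4 : x4 < e14+e24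
      · by_cases Hb : x4 < e14
        · exact ⟨x2, x3, x4, ⟨0,0,0, by ring, by ring, by ring⟩,
            hx2, H2, hx3, H3, hx4, H4, Or.inl Hb⟩
        · push_neg at Hb
          by_cases Hb3 : x3 < e13
          · by_cases Hb2 : x2 < e32
            · exact ⟨x2, x3, x4, ⟨0,0,0, by ring, by ring, by ring⟩,
                hx2, H2, hx3, H3, hx4, H4, Or.inr ⟨Hb2, Hb3⟩⟩
            · -- move m6
              push_neg at Hb2
              have hn2 : (0:ℤ) ≤ x2 - e32 := by linarith
              have hn4 : (0:ℤ) ≤ x4 - e14 := by linarith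
              have hn3 : (0:ℤ) ≤ x3 + e43 := by linarith
              have hmeq : (x2-e32) * bA2 e13 e14 e21 e24 e31 e43
                  + (x3+e43) * bA3 e14 e21 e24 e31 e32 e42
                  + (x4-e14) * bA4 e13 e21 e31 e32 e42 e43 + (x4-e14)
                  = x2 * bA2 e13 e14 e21 e24 e31 e43 + x3 * bA3 e14 e21 e24 e31 e32 e42
                    + x4 * bA4 e13 e21 e31 e32 e42 e43 + x4
                    - (e21 * bA1 e13 e14 e24 e32 e42 e43 + e14) := by
                simp only [bA1, bA2, bA3, bA4]; ring
              have hδ : 1 ≤ e21 * bA1 e13 e14 e24 e32 e42 e43 + e14 := by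
                nlinarith [mul_nonneg (by linarith : (0:ℤ) ≤ e21 - 1) hA1nn]
              have hμ' : 0 ≤ (x2-e32) * bA2 e13 e14 e21 e24 e31 e43
                  + (x3+e43) * bA3 e14 e21 e24 e31 e32 e42
                  + (x4-e14) * bA4 e13 e21 e31 e32 e42 e43 + (x4-e14) := by
                have := mul_nonneg hn2 hA2pos
                have := mul_nonneg hn3 hA3pos
                have := mul_nonneg hn4 hA4pos
                linarith
              have hn1 : 1 ≤ (n:ℤ) := by linarith
              obtain ⟨m, rfl⟩ : ∃ m:ℕ, n = m + 1 := ⟨n - 1, by omega⟩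
              have hb : (x2-e32) * bA2 e13 e14 e21 e24 e31 e43
                  + (x3+e43) * bA3 e14 e21 e24 e31 e32 e42
                  + (x4-e14) * bA4 e13 e21 e31 e32 e42 e43 + (x4-e14) ≤ (m:ℤ) := by
                push_cast at hm ⊢; linarith
              obtain ⟨y2, y3, y4, hlat, hmem⟩ :=
                ih m (Nat.lt_succ_self m) (x2-e32) (x3+e43) (x4-e14) hn2 hn3 hn4 hb
              exact ⟨y2, y3, y4,
                latE_trans ⟨1, 0, 1, by ring, by ring, by ring⟩ hlat, hmem⟩
          · -- move m5
            push_neg at Hb3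
            have hn2 : (0:ℤ) ≤ x2 := hx2
            have hn3 : (0:ℤ) ≤ x3 - e13 := by linarith
            have hn4 : (0:ℤ) ≤ x4 - e14 := by linarith
            have hmeq : x2 * bA2 e13 e14 e21 e24 e31 e43
                + (x3-e13) * bA3 e14 e21 e24 e31 e32 e42
                + (x4-e14) * bA4 e13 e21 e31 e32 e42 e43 + (x4-e14)
                = x2 * bA2 e13 e14 e21 e24 e31 e43 + x3 * bA3 e14 e21 e24 e31 e32 e42
                  + x4 * bA4 e13 e21 e31 e32 e42 e43 + x4
                  - ((e21+e31) * bA1 e13 e14 e24 e32 e42 e43 + e14) := by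
              simp only [bA1, bA2, bA3, bA4]; ring
            have hδ : 1 ≤ (e21+e31) * bA1 e13 e14 e24 e32 e42 e43 + e14 := by
              nlinarith [mul_nonneg (by linarith : (0:ℤ) ≤ e21 + e31) hA1nn]
            have hμ' : 0 ≤ x2 * bA2 e13 e14 e21 e24 e31 e43
                + (x3-e13) * bA3 e14 e21 e24 e31 e32 e42
                + (x4-e14) * bA4 e13 e21 e31 e32 e42 e43 + (x4-e14) := by
              have := mul_nonneg hn2 hA2pos
              have := mul_nonneg hn3 hA3pos
              have := mul_nonneg hn4 hA4pos
              linarith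
            have hn1 : 1 ≤ (n:ℤ) := by linarith
            obtain ⟨m, rfl⟩ : ∃ m:ℕ, n = m + 1 := ⟨n - 1, by omega⟩
            have hb : x2 * bA2 e13 e14 e21 e24 e31 e43
                + (x3-e13) * bA3 e14 e21 e24 e31 e32 e42
                + (x4-e14) * bA4 e13 e21 e31 e32 e42 e43 + (x4-e14) ≤ (m:ℤ) := by
              push_cast at hm ⊢; linarith
            obtain ⟨y2, y3, y4, hlat, hmem⟩ :=
              ih m (Nat.lt_succ_self m) x2 (x3-e13) (x4-e14) hn2 hn3 hn4 hb
            exact ⟨y2, y3, y4,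
              latE_trans ⟨1, 1, 1, by ring, by ring, by ring⟩ hlat, hmem⟩
      · -- move m4
        push_neg at H4
        have hn2 : (0:ℤ) ≤ x2 + e42 := by linarith
        have hn3 : (0:ℤ) ≤ x3 + e43 := by linarith
        have hn4 : (0:ℤ) ≤ x4 - (e14+e24) := by linarith
        have hmeq : (x2+e42) * bA2 e13 e14 e21 e24 e31 e43
            + (x3+e43) * bA3 e14 e21 e24 e31 e32 e42
            + (x4-(e14+e24)) * bA4 e13 e21 e31 e32 e42 e43 + (x4-(e14+e24))
            = x2 * bA2 e13 e14 e21 e24 e31 e43 + x3 * bA3 e14 e21 e24 e31 e32 e42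
              + x4 * bA4 e13 e21 e31 e32 e42 e43 + x4 - (e14+e24) := by
          simp only [bA1, bA2, bA3, bA4]; ring
        have hδ : 1 ≤ e14 + e24 := by linarith
        have hμ' : 0 ≤ (x2+e42) * bA2 e13 e14 e21 e24 e31 e43
            + (x3+e43) * bA3 e14 e21 e24 e31 e32 e42
            + (x4-(e14+e24)) * bA4 e13 e21 e31 e32 e42 e43 + (x4-(e14+e24)) := by
          have := mul_nonneg hn2 hA2pos
          have := mul_nonneg hn3 hA3pos
          have := mul_nonneg hn4 hA4pos
          linarith
        have hn1 : 1 ≤ (n:ℤ) := by linarith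
        obtain ⟨m, rfl⟩ : ∃ m:ℕ, n = m + 1 := ⟨n - 1, by omega⟩
        have hb : (x2+e42) * bA2 e13 e14 e21 e24 e31 e43
            + (x3+e43) * bA3 e14 e21 e24 e31 e32 e42
            + (x4-(e14+e24)) * bA4 e13 e21 e31 e32 e42 e43 + (x4-(e14+e24)) ≤ (m:ℤ) := by
          push_cast at hm ⊢; linarith
        obtain ⟨y2, y3, y4, hlat, hmem⟩ :=
          ih m (Nat.lt_succ_self m) (x2+e42) (x3+e43) (x4-(e14+e24)) hn2 hn3 hn4 hb
        exact ⟨y2, y3, y4,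
          latE_trans ⟨0, 0, 1, by ring, by ring, by ring⟩ hlat, hmem⟩
    · -- move m3
      push_neg at H3
      have hn2 : (0:ℤ) ≤ x2 + e32 := by linarith
      have hn3 : (0:ℤ) ≤ x3 - (e13+e43) := by linarith
      have hn4 : (0:ℤ) ≤ x4 := hx4
      have hmeq : (x2+e32) * bA2 e13 e14 e21 e24 e31 e43
          + (x3-(e13+e43)) * bA3 e14 e21 e24 e31 e32 e42
          + x4 * bA4 e13 e21 e31 e32 e42 e43 + x4
          = x2 * bA2 e13 e14 e21 e24 e31 e43 + x3 * bA3 e14 e21 e24 e31 e32 e42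
            + x4 * bA4 e13 e21 e31 e32 e42 e43 + x4
            - (e31 * bA1 e13 e14 e24 e32 e42 e43) := by
        simp only [bA1, bA2, bA3, bA4]; ring
      have hδ : 1 ≤ e31 * bA1 e13 e14 e24 e32 e42 e43 := by
        nlinarith [mul_nonneg (by linarith : (0:ℤ) ≤ e31 - 1) hA1nn]
      have hμ' : 0 ≤ (x2+e32) * bA2 e13 e14 e21 e24 e31 e43
          + (x3-(e13+e43)) * bA3 e14 e21 e24 e31 e32 e42
          + x4 * bA4 e13 e21 e31 e32 e42 e43 + x4 := by
        have := mul_nonneg hn2 hA2pos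
        have := mul_nonneg hn3 hA3pos
        have := mul_nonneg hn4 hA4pos
        linarith
      have hn1 : 1 ≤ (n:ℤ) := by linarith
      obtain ⟨m, rfl⟩ : ∃ m:ℕ, n = m + 1 := ⟨n - 1, by omega⟩
      have hb : (x2+e32) * bA2 e13 e14 e21 e24 e31 e43
          + (x3-(e13+e43)) * bA3 e14 e21 e24 e31 e32 e42
          + x4 * bA4 e13 e21 e31 e32 e42 e43 + x4 ≤ (m:ℤ) := by
        push_cast at hm ⊢; linarith
      obtain ⟨y2, y3, y4, hlat, hmem⟩ :=
        ih m (Nat.lt_succ_self m) (x2+e32) (x3-(e13+e43)) x4 hn2 hn3 hn4 hb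
      exact ⟨y2, y3, y4,
        latE_trans ⟨0, 1, 0, by ring, by ring, by ring⟩ hlat, hmem⟩
  · -- move m2
    push_neg at H2
    have hn2 : (0:ℤ) ≤ x2 - (e32+e42) := by linarith
    have hn3 : (0:ℤ) ≤ x3 := hx3
    have hn4 : (0:ℤ) ≤ x4 + e24 := by linarith
    have hmeq : (x2-(e32+e42)) * bA2 e13 e14 e21 e24 e31 e43
        + x3 * bA3 e14 e21 e24 e31 e32 e42
        + (x4+e24) * bA4 e13 e21 e31 e32 e42 e43 + (x4+e24)
        = x2 * bA2 e13 e14 e21 e24 e31 e43 + x3 * bA3 e14 e21 e24 e31 e32 e42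
          + x4 * bA4 e13 e21 e31 e32 e42 e43 + x4
          - (e21 * bA1 e13 e14 e24 e32 e42 e43 - e24) := by
      simp only [bA1, bA2, bA3, bA4]; ring
    have hδ : 1 ≤ e21 * bA1 e13 e14 e24 e32 e42 e43 - e24 := by
      nlinarith [mul_nonneg (by linarith : (0:ℤ) ≤ e21 - 1) hA1nn]
    have hμ' : 0 ≤ (x2-(e32+e42)) * bA2 e13 e14 e21 e24 e31 e43
        + x3 * bA3 e14 e21 e24 e31 e32 e42
        + (x4+e24) * bA4 e13 e21 e31 e32 e42 e43 + (x4+e24) := by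
      have := mul_nonneg hn2 hA2pos
      have := mul_nonneg hn3 hA3pos
      have := mul_nonneg hn4 hA4pos
      linarith
    have hn1 : 1 ≤ (n:ℤ) := by linarith
    obtain ⟨m, rfl⟩ : ∃ m:ℕ, n = m + 1 := ⟨n - 1, by omega⟩
    have hb : (x2-(e32+e42)) * bA2 e13 e14 e21 e24 e31 e43
        + x3 * bA3 e14 e21 e24 e31 e32 e42
        + (x4+e24) * bA4 e13 e21 e31 e32 e42 e43 + (x4+e24) ≤ (m:ℤ) := by
      push_cast at hm ⊢; linarith
    obtain ⟨y2, y3, y4, hlat, hmem⟩ :=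
      ih m (Nat.lt_succ_self m) (x2-(e32+e42)) x3 (x4+e24) hn2 hn3 hn4 hb
    exact ⟨y2, y3, y4,
      latE_trans ⟨1, 0, 0, by ring, by ring, by ring⟩ hlat, hmem⟩

lemma tononneg (e13 e14 e24 e32 e42 e43 : ℤ)
    (h13 : 1 ≤ e13) (h14 : 1 ≤ e14) (h24 : 1 ≤ e24) (h32 : 1 ≤ e32)
    (h42 : 1 ≤ e42) (h43 : 1 ≤ e43) (x2 x3 x4 : ℤ) :
    ∃ y2 y3 y4 : ℤ, LatE e13 e14 e24 e32 e42 e43 x2 x3 x4 y2 y3 y4 ∧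
      0 ≤ y2 ∧ 0 ≤ y3 ∧ 0 ≤ y4 := by
  set t := max 0 (-x2) with ht
  have ht0 : 0 ≤ t := le_max_left _ _
  have htx : -x2 ≤ t := le_max_right _ _
  set s := max 0 (max (-x3 - t*(e43 + (e14+e24)*e13)) (-x4 - t*(e14+e24)*(e14-1))) with hs
  have hs0 : 0 ≤ s := le_max_left _ _
  have hs3 : -x3 - t*(e43 + (e14+e24)*e13) ≤ s :=
    le_trans (le_max_left _ _) (le_max_right _ _)
  have hs4 : -x4 - t*(e14+e24)*(e14-1) ≤ s :=
    le_trans (le_max_right _ _) (le_max_right _ _)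
  refine ⟨x2 + t*e42, x3 + t*(e43 + (e14+e24)*e13) + s*e13,
    x4 + t*(e14+e24)*(e14-1) + s*e14,
    ⟨-(t*(e14+e24)) - s, -(t*(e14+e24)) - s, t*(1-(e14+e24)) - s, by ring, by ring, by ring⟩,
    ?_, ?_, ?_⟩
  · nlinarith [mul_nonneg ht0 (by linarith : (0:ℤ) ≤ e42 - 1)]
  · nlinarith [mul_nonneg hs0 (by linarith : (0:ℤ) ≤ e13 - 1)]
  · nlinarith [mul_nonneg hs0 (by linarith : (0:ℤ) ≤ e14 - 1)]

lemma bezout4 (a : Fin 4 → ℤ) (h : Finset.univ.gcd a = 1) :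
    ∃ u1 u2 u3 u4 : ℤ, u1 * a 0 + u2 * a 1 + u3 * a 2 + u4 * a 3 = 1 := by
  have hdvd : ((Int.gcd (a 0) (Int.gcd (a 1) (Int.gcd (a 2) (a 3) : ℤ) : ℤ) : ℕ) : ℤ)
      ∣ Finset.univ.gcd a := by
    apply Finset.dvd_gcd
    intro j _
    fin_cases j
    · exact Int.gcd_dvd_left _ _
    · exact dvd_trans (Int.gcd_dvd_right _ _) (Int.gcd_dvd_left _ _)
    · exact dvd_trans (Int.gcd_dvd_right _ _) (dvd_trans (Int.gcd_dvd_right _ _) (Int.gcd_dvd_left _ _))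
    · exact dvd_trans (Int.gcd_dvd_right _ _) (dvd_trans (Int.gcd_dvd_right _ _) (Int.gcd_dvd_right _ _))
  rw [h] at hdvd
  have hone : ((Int.gcd (a 0) (Int.gcd (a 1) (Int.gcd (a 2) (a 3) : ℤ) : ℤ) : ℕ) : ℤ) = 1 :=
    Int.eq_one_of_dvd_one (by positivity) hdvd
  have h0 := Int.gcd_eq_gcd_ab (a 0) (Int.gcd (a 1) (Int.gcd (a 2) (a 3) : ℤ) : ℤ)
  have h1 := Int.gcd_eq_gcd_ab (a 1) (Int.gcd (a 2) (a 3) : ℤ)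
  have h2 := Int.gcd_eq_gcd_ab (a 2) (a 3)
  rw [hone] at h0
  set α := Int.gcdA (a 0) (Int.gcd (a 1) (Int.gcd (a 2) (a 3) : ℤ) : ℤ)
  set β := Int.gcdB (a 0) (Int.gcd (a 1) (Int.gcd (a 2) (a 3) : ℤ) : ℤ)
  set γ := Int.gcdA (a 1) (Int.gcd (a 2) (a 3) : ℤ)
  set δ := Int.gcdB (a 1) (Int.gcd (a 2) (a 3) : ℤ)
  set ε := Int.gcdA (a 2) (a 3)
  set ζ := Int.gcdB (a 2) (a 3)
  exact ⟨α, β*γ, β*δ*ε, β*δ*ζ, by linear_combination (-1) * h0 - β * h1 - β*δ*h2⟩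

lemma memS (a : Fin 4 → ℤ) (s : ℕ) :
    s ∈ AddSubmonoid.closure (Set.range fun j => (a j).toNat) ↔
      ∃ m0 m1 m2 m3 : ℕ, s = m0 * (a 0).toNat + m1 * (a 1).toNat
        + m2 * (a 2).toNat + m3 * (a 3).toNat := by
  constructor
  · intro hs
    induction hs using AddSubmonoid.closure_induction with
    | mem x hx =>
      obtain ⟨j, rfl⟩ := hx
      fin_cases j
      · exact ⟨1, 0, 0, 0, by simp⟩
      · exact ⟨0, 1, 0, 0, by simp⟩
      · exact ⟨0, 0, 1, 0, by simp⟩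
      · exact ⟨0, 0, 0, 1, by simp⟩
    | zero => exact ⟨0, 0, 0, 0, by simp⟩
    | add x y hx hy ihx ihy =>
      obtain ⟨a0, a1, a2, a3, rfl⟩ := ihx
      obtain ⟨b0, b1, b2, b3, rfl⟩ := ihy
      exact ⟨a0+b0, a1+b1, a2+b2, a3+b3, by ring⟩
  · rintro ⟨m0, m1, m2, m3, rfl⟩
    have hg : ∀ j : Fin 4, (a j).toNat ∈ AddSubmonoid.closure (Set.range fun j => (a j).toNat) :=
      fun j => AddSubmonoid.subset_closure ⟨j, rfl⟩
    have hm : ∀ (m : ℕ) (j : Fin 4), m * (a j).toNat ∈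
        AddSubmonoid.closure (Set.range fun j => (a j).toNat) := by
      intro m j
      simpa [smul_eq_mul] using nsmul_mem (hg j) m
    exact add_mem (add_mem (add_mem (hm m0 0) (hm m1 1)) (hm m2 2)) (hm m3 3)


/-- Bresinsky's criterion: the tuple of signed minors of such a matrix generates a
symmetric numerical semigroup (the curve is Gorenstein). -/
theorem stmt_4
    (c₁ c₂ c₃ c₄ d₁₃ d₁₄ d₂₁ d₂₄ d₃₁ d₃₂ d₄₂ d₄₃ : ℕ)
    (hc₁ : 2 ≤ c₁) (hc₂ : 2 ≤ c₂) (hc₃ : 2 ≤ c₃) (hc₄ : 2 ≤ c₄)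
    (hd₁₃ : 0 < d₁₃) (hd₁₄ : 0 < d₁₄) (hd₂₁ : 0 < d₂₁) (hd₂₄ : 0 < d₂₄)
    (hd₃₁ : 0 < d₃₁) (hd₃₂ : 0 < d₃₂) (hd₄₂ : 0 < d₄₂) (hd₄₃ : 0 < d₄₃)
    (hcol₁ : c₁ = d₂₁ + d₃₁) (hcol₂ : c₂ = d₃₂ + d₄₂)
    (hcol₃ : c₃ = d₁₃ + d₄₃) (hcol₄ : c₄ = d₁₄ + d₂₄)
    (A : Matrix (Fin 4) (Fin 4) ℤ)
    (hA : A = !![-(c₁ : ℤ), 0, (d₁₃ : ℤ), (d₁₄ : ℤ);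
                 (d₂₁ : ℤ), -(c₂ : ℤ), 0, (d₂₄ : ℤ);
                 (d₃₁ : ℤ), (d₃₂ : ℤ), -(c₃ : ℤ), 0;
                 0, (d₄₂ : ℤ), (d₄₃ : ℤ), -(c₄ : ℤ)])
    (a : Fin 4 → ℤ)
    (ha : ∀ j : Fin 4, a j = (-1) ^ ((j : ℕ) + 1) *
        (A.submatrix (Fin.succAbove 0) (Fin.succAbove j)).det)
    (hgcd : Finset.univ.gcd a = 1) :
    IsSymmetricNumericalSemigroup
      (AddSubmonoid.closure (Set.range fun j => (a j).toNat)) := by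
  -- integer positivity of the parameters
  have h13 : (1:ℤ) ≤ (d₁₃:ℤ) := by omega
  have h14 : (1:ℤ) ≤ (d₁₄:ℤ) := by omega
  have h21 : (1:ℤ) ≤ (d₂₁:ℤ) := by omega
  have h24 : (1:ℤ) ≤ (d₂₄:ℤ) := by omega
  have h31 : (1:ℤ) ≤ (d₃₁:ℤ) := by omega
  have h32 : (1:ℤ) ≤ (d₃₂:ℤ) := by omega
  have h42 : (1:ℤ) ≤ (d₄₂:ℤ) := by omega
  have h43 : (1:ℤ) ≤ (d₄₃:ℤ) := by omega
  have hc2 : (c₂:ℤ) = (d₃₂:ℤ) + (d₄₂:ℤ) := by omega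
  have hc3 : (c₃:ℤ) = (d₁₃:ℤ) + (d₄₃:ℤ) := by omega
  have hc4 : (c₄:ℤ) = (d₁₄:ℤ) + (d₂₄:ℤ) := by omega
  -- the generators, computed
  have h0 : A.submatrix (Fin.succAbove 0) (Fin.succAbove 0) =
      !![-(c₂:ℤ), 0, (d₂₄:ℤ); (d₃₂:ℤ), -(c₃:ℤ), 0; (d₄₂:ℤ), (d₄₃:ℤ), -(c₄:ℤ)] := by
    subst hA; ext i j; fin_cases i <;> fin_cases j <;> rfl
  have h1 : A.submatrix (Fin.succAbove 0) (Fin.succAbove 1) =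
      !![(d₂₁:ℤ), 0, (d₂₄:ℤ); (d₃₁:ℤ), -(c₃:ℤ), 0; 0, (d₄₃:ℤ), -(c₄:ℤ)] := by
    subst hA; ext i j; fin_cases i <;> fin_cases j <;> rfl
  have h2 : A.submatrix (Fin.succAbove 0) (Fin.succAbove 2) =
      !![(d₂₁:ℤ), -(c₂:ℤ), (d₂₄:ℤ); (d₃₁:ℤ), (d₃₂:ℤ), 0; 0, (d₄₂:ℤ), -(c₄:ℤ)] := by
    subst hA; ext i j; fin_cases i <;> fin_cases j <;> rfl
  have h3 : A.submatrix (Fin.succAbove 0) (Fin.succAbove 3) =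
      !![(d₂₁:ℤ), -(c₂:ℤ), 0; (d₃₁:ℤ), (d₃₂:ℤ), -(c₃:ℤ); 0, (d₄₂:ℤ), (d₄₃:ℤ)] := by
    subst hA; ext i j; fin_cases i <;> fin_cases j <;> rfl
  have ea0' : a 0 = (c₂:ℤ)*(c₃:ℤ)*(c₄:ℤ) - (d₂₄:ℤ)*(d₃₂:ℤ)*(d₄₃:ℤ) - (d₂₄:ℤ)*(c₃:ℤ)*(d₄₂:ℤ) := by
    rw [ha 0, h0, Matrix.det_fin_three]
    simp only [show (((0:Fin 4)):ℕ) = 0 from rfl]; norm_num [Matrix.cons_val_two, Matrix.vecHead, Matrix.vecTail]; try ring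
  have ea1' : a 1 = (d₂₁:ℤ)*(c₃:ℤ)*(c₄:ℤ) + (d₂₄:ℤ)*(d₃₁:ℤ)*(d₄₃:ℤ) := by
    rw [ha 1, h1, Matrix.det_fin_three]
    simp only [show (((1:Fin 4)):ℕ) = 1 from rfl]; norm_num [Matrix.cons_val_two, Matrix.vecHead, Matrix.vecTail]; try ring
  have ea2' : a 2 = (d₂₁:ℤ)*(d₃₂:ℤ)*(c₄:ℤ) + (c₂:ℤ)*(d₃₁:ℤ)*(c₄:ℤ) - (d₂₄:ℤ)*(d₃₁:ℤ)*(d₄₂:ℤ) := by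
    rw [ha 2, h2, Matrix.det_fin_three]
    simp only [show (((2:Fin 4)):ℕ) = 2 from rfl]; norm_num [Matrix.cons_val_two, Matrix.vecHead, Matrix.vecTail]; try ring
  have ea3' : a 3 = (d₂₁:ℤ)*(d₃₂:ℤ)*(d₄₃:ℤ) + (d₂₁:ℤ)*(c₃:ℤ)*(d₄₂:ℤ) + (c₂:ℤ)*(d₃₁:ℤ)*(d₄₃:ℤ) := by
    rw [ha 3, h3, Matrix.det_fin_three]
    simp only [show (((3:Fin 4)):ℕ) = 3 from rfl]; norm_num [Matrix.cons_val_two, Matrix.vecHead, Matrix.vecTail]; try ring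
  have ea0 : a 0 = bA1 (d₁₃:ℤ) (d₁₄:ℤ) (d₂₄:ℤ) (d₃₂:ℤ) (d₄₂:ℤ) (d₄₃:ℤ) := by rw [ea0', hc2, hc3, hc4]; simp only [bA1]; ring
  have ea1 : a 1 = bA2 (d₁₃:ℤ) (d₁₄:ℤ) (d₂₁:ℤ) (d₂₄:ℤ) (d₃₁:ℤ) (d₄₃:ℤ) := by rw [ea1', hc3, hc4]; simp only [bA2]; ring
  have ea2 : a 2 = bA3 (d₁₄:ℤ) (d₂₁:ℤ) (d₂₄:ℤ) (d₃₁:ℤ) (d₃₂:ℤ) (d₄₂:ℤ) := by rw [ea2', hc2, hc4]; simp only [bA3]; ring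
  have ea3 : a 3 = bA4 (d₁₃:ℤ) (d₂₁:ℤ) (d₃₁:ℤ) (d₃₂:ℤ) (d₄₂:ℤ) (d₄₃:ℤ) := by rw [ea3', hc2, hc3]; simp only [bA4]; ring
  -- positivity of the generators
  have hA1big : (d₂₄:ℤ) + 4 ≤ bA1 (d₁₃:ℤ) (d₁₄:ℤ) (d₂₄:ℤ) (d₃₂:ℤ) (d₄₂:ℤ) (d₄₃:ℤ) := bA1_big h13 h14 h24 h32 h42 h43
  have hA2pos : (5:ℤ) ≤ bA2 (d₁₃:ℤ) (d₁₄:ℤ) (d₂₁:ℤ) (d₂₄:ℤ) (d₃₁:ℤ) (d₄₃:ℤ) := bA2_pos h13 h14 h21 h24 h31 h43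
  have hA3pos : (5:ℤ) ≤ bA3 (d₁₄:ℤ) (d₂₁:ℤ) (d₂₄:ℤ) (d₃₁:ℤ) (d₃₂:ℤ) (d₄₂:ℤ) := bA3_pos h14 h21 h24 h31 h32 h42
  have hA4pos : (5:ℤ) ≤ bA4 (d₁₃:ℤ) (d₂₁:ℤ) (d₃₁:ℤ) (d₃₂:ℤ) (d₄₂:ℤ) (d₄₃:ℤ) := bA4_pos h13 h21 h31 h32 h42 h43
  have ha0nn : 0 ≤ a 0 := by rw [ea0]; linarith only [hA1big, h24]
  have ha1nn : 0 ≤ a 1 := by rw [ea1]; linarith only [hA2pos]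
  have ha2nn : 0 ≤ a 2 := by rw [ea2]; linarith only [hA3pos]
  have ha3nn : 0 ≤ a 3 := by rw [ea3]; linarith only [hA4pos]
  have t0 : (((a 0).toNat : ℕ) : ℤ) = bA1 (d₁₃:ℤ) (d₁₄:ℤ) (d₂₄:ℤ) (d₃₂:ℤ) (d₄₂:ℤ) (d₄₃:ℤ) := by rw [Int.toNat_of_nonneg ha0nn, ea0]
  have t1 : (((a 1).toNat : ℕ) : ℤ) = bA2 (d₁₃:ℤ) (d₁₄:ℤ) (d₂₁:ℤ) (d₂₄:ℤ) (d₃₁:ℤ) (d₄₃:ℤ) := by rw [Int.toNat_of_nonneg ha1nn, ea1]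
  have t2 : (((a 2).toNat : ℕ) : ℤ) = bA3 (d₁₄:ℤ) (d₂₁:ℤ) (d₂₄:ℤ) (d₃₁:ℤ) (d₃₂:ℤ) (d₄₂:ℤ) := by rw [Int.toNat_of_nonneg ha2nn, ea2]
  have t3 : (((a 3).toNat : ℕ) : ℤ) = bA4 (d₁₃:ℤ) (d₂₁:ℤ) (d₃₁:ℤ) (d₃₂:ℤ) (d₄₂:ℤ) (d₄₃:ℤ) := by rw [Int.toNat_of_nonneg ha3nn, ea3]
  have hg0 : 2 ≤ (a 0).toNat := by
    have : (2:ℤ) ≤ (((a 0).toNat : ℕ) : ℤ) := by rw [t0]; linarith only [hA1big, h24]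
    exact_mod_cast this
  have hg1 : 2 ≤ (a 1).toNat := by
    have : (2:ℤ) ≤ (((a 1).toNat : ℕ) : ℤ) := by rw [t1]; linarith only [hA2pos]
    exact_mod_cast this
  have hg2 : 2 ≤ (a 2).toNat := by
    have : (2:ℤ) ≤ (((a 2).toNat : ℕ) : ℤ) := by rw [t2]; linarith only [hA3pos]
    exact_mod_cast this
  have hg3 : 2 ≤ (a 3).toNat := by
    have : (2:ℤ) ≤ (((a 3).toNat : ℕ) : ℤ) := by rw [t3]; linarith only [hA4pos]
    exact_mod_cast this
  -- Bezout coefficients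
  obtain ⟨u1, u2, u3, u4, hu⟩ := bezout4 a hgcd
  rw [ea0, ea1, ea2, ea3] at hu
  have huE := hu
  simp only [bA1, bA2, bA3, bA4] at huE
  -- the membership criterion
  have crit : ∀ (z x1 y2 y3 y4 : ℤ), memD (d₁₃:ℤ) (d₁₄:ℤ) (d₂₄:ℤ) (d₃₂:ℤ) (d₄₂:ℤ) (d₄₃:ℤ) y2 y3 y4 →
      x1 * (bA1 (d₁₃:ℤ) (d₁₄:ℤ) (d₂₄:ℤ) (d₃₂:ℤ) (d₄₂:ℤ) (d₄₃:ℤ)) + y2 * (bA2 (d₁₃:ℤ) (d₁₄:ℤ) (d₂₁:ℤ) (d₂₄:ℤ) (d₃₁:ℤ) (d₄₃:ℤ)) + y3 * (bA3 (d₁₄:ℤ) (d₂₁:ℤ) (d₂₄:ℤ) (d₃₁:ℤ) (d₃₂:ℤ) (d₄₂:ℤ)) + y4 * (bA4 (d₁₃:ℤ) (d₂₁:ℤ) (d₃₁:ℤ) (d₃₂:ℤ) (d₄₂:ℤ) (d₄₃:ℤ)) = z →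
      ((∃ s ∈ AddSubmonoid.closure (Set.range fun j => (a j).toNat), (s:ℤ) = z) ↔ 0 ≤ x1) := by
    intro z x1 y2 y3 y4 hD hrep
    obtain ⟨hy2, hy2', hy3, hy3', hy4, hy4', hbox⟩ := hD
    constructor
    · rintro ⟨s, hsS, hsz⟩
      rw [memS] at hsS
      obtain ⟨m0, m1, m2, m3, rfl⟩ := hsS
      push_cast at hsz
      rw [t0, t1, t2, t3] at hsz
      have hv : ((m0:ℤ) - x1) * (bA1 (d₁₃:ℤ) (d₁₄:ℤ) (d₂₄:ℤ) (d₃₂:ℤ) (d₄₂:ℤ) (d₄₃:ℤ)) + ((m1:ℤ) - y2) * (bA2 (d₁₃:ℤ) (d₁₄:ℤ) (d₂₁:ℤ) (d₂₄:ℤ) (d₃₁:ℤ) (d₄₃:ℤ))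
          + ((m2:ℤ) - y3) * (bA3 (d₁₄:ℤ) (d₂₁:ℤ) (d₂₄:ℤ) (d₃₁:ℤ) (d₃₂:ℤ) (d₄₂:ℤ)) + ((m3:ℤ) - y4) * (bA4 (d₁₃:ℤ) (d₂₁:ℤ) (d₃₁:ℤ) (d₃₂:ℤ) (d₄₂:ℤ) (d₄₃:ℤ)) = 0 := by
        linear_combination hsz - hrep
      obtain ⟨l2, l3, l4, hv1, hv2, hv3, hv4⟩ :=
        satur _ _ _ _ _ _ _ _ u1 u2 u3 u4 _ _ _ _ hu hv
      have hm1nn : (0:ℤ) ≤ (m1:ℤ) := by positivity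
      have hm2nn : (0:ℤ) ≤ (m2:ℤ) := by positivity
      have hm3nn : (0:ℤ) ≤ (m3:ℤ) := by positivity
      have hb2 : 0 ≤ y2 - l2*((d₃₂:ℤ)+(d₄₂:ℤ)) + l3*(d₃₂:ℤ) + l4*(d₄₂:ℤ) := by linarith only [hv2, hm1nn]
      have hb3 : 0 ≤ y3 - l3*((d₁₃:ℤ)+(d₄₃:ℤ)) + l4*(d₄₃:ℤ) := by linarith only [hv3, hm2nn]
      have hb4 : 0 ≤ y4 + l2*(d₂₄:ℤ) - l4*((d₁₄:ℤ)+(d₂₄:ℤ)) := by linarith only [hv4, hm3nn]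
      obtain ⟨hl2, hl3⟩ := minim (d₁₃:ℤ) (d₁₄:ℤ) (d₂₄:ℤ) (d₃₂:ℤ) (d₄₂:ℤ) (d₄₃:ℤ)
        h13 h14 h24 h32 h42 h43 y2 y3 y4 l2 l3 l4 hy2 hy2' hy3 hy3' hy4 hy4' hbox hb2 hb3 hb4
      have q2 : l2*(d₂₁:ℤ) ≤ 0 := mul_nonpos_of_nonpos_of_nonneg hl2 (by linarith)
      have q3 : l3*(d₃₁:ℤ) ≤ 0 := mul_nonpos_of_nonpos_of_nonneg hl3 (by linarith)
      have hm0nn : (0:ℤ) ≤ (m0:ℤ) := by positivity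
      -- hv1 : ↑m0 - x1 = l2 * d₂₁ + l3 * d₃₁
      linarith only [q2, q3, hm0nn, hv1]
    · intro hx1
      refine ⟨x1.toNat * (a 0).toNat + y2.toNat * (a 1).toNat
          + y3.toNat * (a 2).toNat + y4.toNat * (a 3).toNat,
        (memS a _).mpr ⟨_, _, _, _, rfl⟩, ?_⟩
      push_cast
      rw [t0, t1, t2, t3, Int.toNat_of_nonneg hx1, Int.toNat_of_nonneg hy2,
        Int.toNat_of_nonneg hy3, Int.toNat_of_nonneg hy4]
      linear_combination hrep
  -- the master symmetry statement
  have master : ∀ z : ℤ,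
      (∃ s ∈ AddSubmonoid.closure (Set.range fun j => (a j).toNat), (s:ℤ) = z) ↔
      ¬ ∃ s ∈ AddSubmonoid.closure (Set.range fun j => (a j).toNat), (s:ℤ) = ((((d₃₂:ℤ)+(d₄₂:ℤ))-1) * (bA2 (d₁₃:ℤ) (d₁₄:ℤ) (d₂₁:ℤ) (d₂₄:ℤ) (d₃₁:ℤ) (d₄₃:ℤ)) + (((d₁₃:ℤ)+(d₄₃:ℤ))-1) * (bA3 (d₁₄:ℤ) (d₂₁:ℤ) (d₂₄:ℤ) (d₃₁:ℤ) (d₃₂:ℤ) (d₄₂:ℤ)) + (((d₁₄:ℤ))-1) * (bA4 (d₁₃:ℤ) (d₂₁:ℤ) (d₃₁:ℤ) (d₃₂:ℤ) (d₄₂:ℤ) (d₄₃:ℤ)) - (bA1 (d₁₃:ℤ) (d₁₄:ℤ) (d₂₄:ℤ) (d₃₂:ℤ) (d₄₂:ℤ) (d₄₃:ℤ))) - z := by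
    intro z
    obtain ⟨p2, p3, p4, hlat1, hp2, hp3, hp4⟩ :=
      tononneg (d₁₃:ℤ) (d₁₄:ℤ) (d₂₄:ℤ) (d₃₂:ℤ) (d₄₂:ℤ) (d₄₃:ℤ)
        h13 h14 h24 h32 h42 h43 (z*u2) (z*u3) (z*u4)
    obtain ⟨w2, w3, w4, hlat2, hmem⟩ :=
      descend (d₁₃:ℤ) (d₁₄:ℤ) (d₂₁:ℤ) (d₂₄:ℤ) (d₃₁:ℤ) (d₃₂:ℤ) (d₄₂:ℤ) (d₄₃:ℤ)
        h13 h14 h21 h24 h31 h32 h42 h43 hA1big (by linarith only [hA2pos]) (by linarith only [hA3pos]) (by linarith only [hA4pos])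
        (p2 * (bA2 (d₁₃:ℤ) (d₁₄:ℤ) (d₂₁:ℤ) (d₂₄:ℤ) (d₃₁:ℤ) (d₄₃:ℤ)) + p3 * (bA3 (d₁₄:ℤ) (d₂₁:ℤ) (d₂₄:ℤ) (d₃₁:ℤ) (d₃₂:ℤ) (d₄₂:ℤ)) + p4 * (bA4 (d₁₃:ℤ) (d₂₁:ℤ) (d₃₁:ℤ) (d₃₂:ℤ) (d₄₂:ℤ) (d₄₃:ℤ)) + p4).toNat p2 p3 p4 hp2 hp3 hp4
        (Int.self_le_toNat _)
    obtain ⟨l2, l3, l4, hw2, hw3, hw4⟩ := latE_trans hlat1 hlat2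
    have hrep : (z*u1 + l2*(d₂₁:ℤ) + l3*(d₃₁:ℤ)) * (bA1 (d₁₃:ℤ) (d₁₄:ℤ) (d₂₄:ℤ) (d₃₂:ℤ) (d₄₂:ℤ) (d₄₃:ℤ)) + w2 * (bA2 (d₁₃:ℤ) (d₁₄:ℤ) (d₂₁:ℤ) (d₂₄:ℤ) (d₃₁:ℤ) (d₄₃:ℤ))
        + w3 * (bA3 (d₁₄:ℤ) (d₂₁:ℤ) (d₂₄:ℤ) (d₃₁:ℤ) (d₃₂:ℤ) (d₄₂:ℤ)) + w4 * (bA4 (d₁₃:ℤ) (d₂₁:ℤ) (d₃₁:ℤ) (d₃₂:ℤ) (d₄₂:ℤ) (d₄₃:ℤ)) = z := by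
      rw [hw2, hw3, hw4]
      simp only [bA1, bA2, bA3, bA4]
      linear_combination z * huE
    have iff1 := crit z (z*u1 + l2*(d₂₁:ℤ) + l3*(d₃₁:ℤ)) w2 w3 w4 hmem hrep
    obtain ⟨hw2n, hw2n', hw3n, hw3n', hw4n, hw4n', hwbox⟩ := hmem
    rcases lt_or_ge w4 (d₁₄:ℤ) with hb | hb
    · -- partner inside box 2
      have hmem' : memD (d₁₃:ℤ) (d₁₄:ℤ) (d₂₄:ℤ) (d₃₂:ℤ) (d₄₂:ℤ) (d₄₃:ℤ) (((d₃₂:ℤ)+(d₄₂:ℤ))-1-w2) (((d₁₃:ℤ)+(d₄₃:ℤ))-1-w3)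
          ((d₁₄:ℤ)-1-w4) := by
        refine ⟨by omega, by omega, by omega, by omega, by omega, by omega, Or.inl (by omega)⟩
      have hrep' : (-1 - (z*u1 + l2*(d₂₁:ℤ) + l3*(d₃₁:ℤ))) * (bA1 (d₁₃:ℤ) (d₁₄:ℤ) (d₂₄:ℤ) (d₃₂:ℤ) (d₄₂:ℤ) (d₄₃:ℤ))
          + (((d₃₂:ℤ)+(d₄₂:ℤ))-1-w2) * (bA2 (d₁₃:ℤ) (d₁₄:ℤ) (d₂₁:ℤ) (d₂₄:ℤ) (d₃₁:ℤ) (d₄₃:ℤ)) + (((d₁₃:ℤ)+(d₄₃:ℤ))-1-w3) * (bA3 (d₁₄:ℤ) (d₂₁:ℤ) (d₂₄:ℤ) (d₃₁:ℤ) (d₃₂:ℤ) (d₄₂:ℤ))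
          + ((d₁₄:ℤ)-1-w4) * (bA4 (d₁₃:ℤ) (d₂₁:ℤ) (d₃₁:ℤ) (d₃₂:ℤ) (d₄₂:ℤ) (d₄₃:ℤ)) = ((((d₃₂:ℤ)+(d₄₂:ℤ))-1) * (bA2 (d₁₃:ℤ) (d₁₄:ℤ) (d₂₁:ℤ) (d₂₄:ℤ) (d₃₁:ℤ) (d₄₃:ℤ)) + (((d₁₃:ℤ)+(d₄₃:ℤ))-1) * (bA3 (d₁₄:ℤ) (d₂₁:ℤ) (d₂₄:ℤ) (d₃₁:ℤ) (d₃₂:ℤ) (d₄₂:ℤ)) + (((d₁₄:ℤ))-1) * (bA4 (d₁₃:ℤ) (d₂₁:ℤ) (d₃₁:ℤ) (d₃₂:ℤ) (d₄₂:ℤ) (d₄₃:ℤ)) - (bA1 (d₁₃:ℤ) (d₁₄:ℤ) (d₂₄:ℤ) (d₃₂:ℤ) (d₄₂:ℤ) (d₄₃:ℤ))) - z := by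
        linear_combination (-1 : ℤ) * hrep
      have iff2 := crit (((((d₃₂:ℤ)+(d₄₂:ℤ))-1) * (bA2 (d₁₃:ℤ) (d₁₄:ℤ) (d₂₁:ℤ) (d₂₄:ℤ) (d₃₁:ℤ) (d₄₃:ℤ)) + (((d₁₃:ℤ)+(d₄₃:ℤ))-1) * (bA3 (d₁₄:ℤ) (d₂₁:ℤ) (d₂₄:ℤ) (d₃₁:ℤ) (d₃₂:ℤ) (d₄₂:ℤ)) + (((d₁₄:ℤ))-1) * (bA4 (d₁₃:ℤ) (d₂₁:ℤ) (d₃₁:ℤ) (d₃₂:ℤ) (d₄₂:ℤ) (d₄₃:ℤ)) - (bA1 (d₁₃:ℤ) (d₁₄:ℤ) (d₂₄:ℤ) (d₃₂:ℤ) (d₄₂:ℤ) (d₄₃:ℤ))) - z) (-1 - (z*u1 + l2*(d₂₁:ℤ) + l3*(d₃₁:ℤ)))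
        _ _ _ hmem' hrep'
      rw [iff1, iff2]; omega
    · -- partner inside box 1
      obtain ⟨hbb2, hbb3⟩ : w2 < (d₃₂:ℤ) ∧ w3 < (d₁₃:ℤ) := by
        rcases hwbox with h | h
        · omega
        · exact h
      have hmem' : memD (d₁₃:ℤ) (d₁₄:ℤ) (d₂₄:ℤ) (d₃₂:ℤ) (d₄₂:ℤ) (d₄₃:ℤ) ((d₃₂:ℤ)-1-w2) ((d₁₃:ℤ)-1-w3)
          (((d₁₄:ℤ)+(d₂₄:ℤ))+(d₁₄:ℤ)-1-w4) := by
        refine ⟨by omega, by omega, by omega, by omega, by omega, by omega,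
          Or.inr ⟨by omega, by omega⟩⟩
      have hrep' : (-1 - (z*u1 + l2*(d₂₁:ℤ) + l3*(d₃₁:ℤ))) * (bA1 (d₁₃:ℤ) (d₁₄:ℤ) (d₂₄:ℤ) (d₃₂:ℤ) (d₄₂:ℤ) (d₄₃:ℤ))
          + ((d₃₂:ℤ)-1-w2) * (bA2 (d₁₃:ℤ) (d₁₄:ℤ) (d₂₁:ℤ) (d₂₄:ℤ) (d₃₁:ℤ) (d₄₃:ℤ)) + ((d₁₃:ℤ)-1-w3) * (bA3 (d₁₄:ℤ) (d₂₁:ℤ) (d₂₄:ℤ) (d₃₁:ℤ) (d₃₂:ℤ) (d₄₂:ℤ))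
          + (((d₁₄:ℤ)+(d₂₄:ℤ))+(d₁₄:ℤ)-1-w4) * (bA4 (d₁₃:ℤ) (d₂₁:ℤ) (d₃₁:ℤ) (d₃₂:ℤ) (d₄₂:ℤ) (d₄₃:ℤ)) = ((((d₃₂:ℤ)+(d₄₂:ℤ))-1) * (bA2 (d₁₃:ℤ) (d₁₄:ℤ) (d₂₁:ℤ) (d₂₄:ℤ) (d₃₁:ℤ) (d₄₃:ℤ)) + (((d₁₃:ℤ)+(d₄₃:ℤ))-1) * (bA3 (d₁₄:ℤ) (d₂₁:ℤ) (d₂₄:ℤ) (d₃₁:ℤ) (d₃₂:ℤ) (d₄₂:ℤ)) + (((d₁₄:ℤ))-1) * (bA4 (d₁₃:ℤ) (d₂₁:ℤ) (d₃₁:ℤ) (d₃₂:ℤ) (d₄₂:ℤ) (d₄₃:ℤ)) - (bA1 (d₁₃:ℤ) (d₁₄:ℤ) (d₂₄:ℤ) (d₃₂:ℤ) (d₄₂:ℤ) (d₄₃:ℤ))) - z := by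
        simp only [bA1, bA2, bA3, bA4] at hrep ⊢
        linear_combination (-1 : ℤ) * hrep
      have iff2 := crit (((((d₃₂:ℤ)+(d₄₂:ℤ))-1) * (bA2 (d₁₃:ℤ) (d₁₄:ℤ) (d₂₁:ℤ) (d₂₄:ℤ) (d₃₁:ℤ) (d₄₃:ℤ)) + (((d₁₃:ℤ)+(d₄₃:ℤ))-1) * (bA3 (d₁₄:ℤ) (d₂₁:ℤ) (d₂₄:ℤ) (d₃₁:ℤ) (d₃₂:ℤ) (d₄₂:ℤ)) + (((d₁₄:ℤ))-1) * (bA4 (d₁₃:ℤ) (d₂₁:ℤ) (d₃₁:ℤ) (d₃₂:ℤ) (d₄₂:ℤ) (d₄₃:ℤ)) - (bA1 (d₁₃:ℤ) (d₁₄:ℤ) (d₂₄:ℤ) (d₃₂:ℤ) (d₄₂:ℤ) (d₄₃:ℤ))) - z) (-1 - (z*u1 + l2*(d₂₁:ℤ) + l3*(d₃₁:ℤ)))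
        _ _ _ hmem' hrep'
      rw [iff1, iff2]; omega
  -- the Frobenius number is nonnegative
  have hone : ¬ ∃ s ∈ AddSubmonoid.closure (Set.range fun j => (a j).toNat), (s:ℤ) = 1 := by
    rintro ⟨s, hsS, hs1⟩
    rw [memS] at hsS
    obtain ⟨m0, m1, m2, m3, rfl⟩ := hsS
    have : m0 * (a 0).toNat + m1 * (a 1).toNat + m2 * (a 2).toNat + m3 * (a 3).toNat = 1 := by
      exact_mod_cast hs1
    have k0 : m0 * (a 0).toNat = 0 ∨ 2 ≤ m0 * (a 0).toNat := by
      rcases Nat.eq_zero_or_pos m0 with h | h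
      · left; rw [h, Nat.zero_mul]
      · right; exact le_trans hg0 (Nat.le_mul_of_pos_left _ h)
    have k1 : m1 * (a 1).toNat = 0 ∨ 2 ≤ m1 * (a 1).toNat := by
      rcases Nat.eq_zero_or_pos m1 with h | h
      · left; rw [h, Nat.zero_mul]
      · right; exact le_trans hg1 (Nat.le_mul_of_pos_left _ h)
    have k2 : m2 * (a 2).toNat = 0 ∨ 2 ≤ m2 * (a 2).toNat := by
      rcases Nat.eq_zero_or_pos m2 with h | h
      · left; rw [h, Nat.zero_mul]
      · right; exact le_trans hg2 (Nat.le_mul_of_pos_left _ h)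
    have k3 : m3 * (a 3).toNat = 0 ∨ 2 ≤ m3 * (a 3).toNat := by
      rcases Nat.eq_zero_or_pos m3 with h | h
      · left; rw [h, Nat.zero_mul]
      · right; exact le_trans hg3 (Nat.le_mul_of_pos_left _ h)
    omega
  have hFpos : 1 ≤ ((((d₃₂:ℤ)+(d₄₂:ℤ))-1) * (bA2 (d₁₃:ℤ) (d₁₄:ℤ) (d₂₁:ℤ) (d₂₄:ℤ) (d₃₁:ℤ) (d₄₃:ℤ)) + (((d₁₃:ℤ)+(d₄₃:ℤ))-1) * (bA3 (d₁₄:ℤ) (d₂₁:ℤ) (d₂₄:ℤ) (d₃₁:ℤ) (d₃₂:ℤ) (d₄₂:ℤ)) + (((d₁₄:ℤ))-1) * (bA4 (d₁₃:ℤ) (d₂₁:ℤ) (d₃₁:ℤ) (d₃₂:ℤ) (d₄₂:ℤ) (d₄₃:ℤ)) - (bA1 (d₁₃:ℤ) (d₁₄:ℤ) (d₂₄:ℤ) (d₃₂:ℤ) (d₄₂:ℤ) (d₄₃:ℤ))) := by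
    have h2 : ∃ s ∈ AddSubmonoid.closure (Set.range fun j => (a j).toNat),
        (s:ℤ) = ((((d₃₂:ℤ)+(d₄₂:ℤ))-1) * (bA2 (d₁₃:ℤ) (d₁₄:ℤ) (d₂₁:ℤ) (d₂₄:ℤ) (d₃₁:ℤ) (d₄₃:ℤ)) + (((d₁₃:ℤ)+(d₄₃:ℤ))-1) * (bA3 (d₁₄:ℤ) (d₂₁:ℤ) (d₂₄:ℤ) (d₃₁:ℤ) (d₃₂:ℤ) (d₄₂:ℤ)) + (((d₁₄:ℤ))-1) * (bA4 (d₁₃:ℤ) (d₂₁:ℤ) (d₃₁:ℤ) (d₃₂:ℤ) (d₄₂:ℤ) (d₄₃:ℤ)) - (bA1 (d₁₃:ℤ) (d₁₄:ℤ) (d₂₄:ℤ) (d₃₂:ℤ) (d₄₂:ℤ) (d₄₃:ℤ))) - 1 := by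
      by_contra hc
      exact hone ((master 1).mpr hc)
    obtain ⟨s, _, hs⟩ := h2
    have hsnn : (0:ℤ) ≤ (s:ℤ) := by positivity
    linarith only [hs, hsnn]
  refine ⟨((((d₃₂:ℤ)+(d₄₂:ℤ))-1) * (bA2 (d₁₃:ℤ) (d₁₄:ℤ) (d₂₁:ℤ) (d₂₄:ℤ) (d₃₁:ℤ) (d₄₃:ℤ)) + (((d₁₃:ℤ)+(d₄₃:ℤ))-1) * (bA3 (d₁₄:ℤ) (d₂₁:ℤ) (d₂₄:ℤ) (d₃₁:ℤ) (d₃₂:ℤ) (d₄₂:ℤ)) + (((d₁₄:ℤ))-1) * (bA4 (d₁₃:ℤ) (d₂₁:ℤ) (d₃₁:ℤ) (d₃₂:ℤ) (d₄₂:ℤ) (d₄₃:ℤ)) - (bA1 (d₁₃:ℤ) (d₁₄:ℤ) (d₂₄:ℤ) (d₃₂:ℤ) (d₄₂:ℤ) (d₄₃:ℤ))).toNat, ?_, ?_, ?_⟩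
  · -- F ∉ S
    intro hF
    have hz : ∃ s ∈ AddSubmonoid.closure (Set.range fun j => (a j).toNat), (s:ℤ) = 0 :=
      ⟨0, AddSubmonoid.zero_mem _, rfl⟩
    apply (master 0).mp hz
    exact ⟨((((d₃₂:ℤ)+(d₄₂:ℤ))-1) * (bA2 (d₁₃:ℤ) (d₁₄:ℤ) (d₂₁:ℤ) (d₂₄:ℤ) (d₃₁:ℤ) (d₄₃:ℤ)) + (((d₁₃:ℤ)+(d₄₃:ℤ))-1) * (bA3 (d₁₄:ℤ) (d₂₁:ℤ) (d₂₄:ℤ) (d₃₁:ℤ) (d₃₂:ℤ) (d₄₂:ℤ)) + (((d₁₄:ℤ))-1) * (bA4 (d₁₃:ℤ) (d₂₁:ℤ) (d₃₁:ℤ) (d₃₂:ℤ) (d₄₂:ℤ) (d₄₃:ℤ)) - (bA1 (d₁₃:ℤ) (d₁₄:ℤ) (d₂₄:ℤ) (d₃₂:ℤ) (d₄₂:ℤ) (d₄₃:ℤ))).toNat, hF, by rw [Int.toNat_of_nonneg (by linarith only [hFpos])]; ring⟩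
  · -- everything above F is in S
    intro m hm
    have hmZ : ((((d₃₂:ℤ)+(d₄₂:ℤ))-1) * (bA2 (d₁₃:ℤ) (d₁₄:ℤ) (d₂₁:ℤ) (d₂₄:ℤ) (d₃₁:ℤ) (d₄₃:ℤ)) + (((d₁₃:ℤ)+(d₄₃:ℤ))-1) * (bA3 (d₁₄:ℤ) (d₂₁:ℤ) (d₂₄:ℤ) (d₃₁:ℤ) (d₃₂:ℤ) (d₄₂:ℤ)) + (((d₁₄:ℤ))-1) * (bA4 (d₁₃:ℤ) (d₂₁:ℤ) (d₃₁:ℤ) (d₃₂:ℤ) (d₄₂:ℤ) (d₄₃:ℤ)) - (bA1 (d₁₃:ℤ) (d₁₄:ℤ) (d₂₄:ℤ) (d₃₂:ℤ) (d₄₂:ℤ) (d₄₃:ℤ))) < (m:ℤ) := by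
      have := Int.toNat_of_nonneg (show (0:ℤ) ≤ ((((d₃₂:ℤ)+(d₄₂:ℤ))-1) * (bA2 (d₁₃:ℤ) (d₁₄:ℤ) (d₂₁:ℤ) (d₂₄:ℤ) (d₃₁:ℤ) (d₄₃:ℤ)) + (((d₁₃:ℤ)+(d₄₃:ℤ))-1) * (bA3 (d₁₄:ℤ) (d₂₁:ℤ) (d₂₄:ℤ) (d₃₁:ℤ) (d₃₂:ℤ) (d₄₂:ℤ)) + (((d₁₄:ℤ))-1) * (bA4 (d₁₃:ℤ) (d₂₁:ℤ) (d₃₁:ℤ) (d₃₂:ℤ) (d₄₂:ℤ) (d₄₃:ℤ)) - (bA1 (d₁₃:ℤ) (d₁₄:ℤ) (d₂₄:ℤ) (d₃₂:ℤ) (d₄₂:ℤ) (d₄₃:ℤ))) by linarith)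
      omega
    have h2 : ¬ ∃ s ∈ AddSubmonoid.closure (Set.range fun j => (a j).toNat),
        (s:ℤ) = ((((d₃₂:ℤ)+(d₄₂:ℤ))-1) * (bA2 (d₁₃:ℤ) (d₁₄:ℤ) (d₂₁:ℤ) (d₂₄:ℤ) (d₃₁:ℤ) (d₄₃:ℤ)) + (((d₁₃:ℤ)+(d₄₃:ℤ))-1) * (bA3 (d₁₄:ℤ) (d₂₁:ℤ) (d₂₄:ℤ) (d₃₁:ℤ) (d₃₂:ℤ) (d₄₂:ℤ)) + (((d₁₄:ℤ))-1) * (bA4 (d₁₃:ℤ) (d₂₁:ℤ) (d₃₁:ℤ) (d₃₂:ℤ) (d₄₂:ℤ) (d₄₃:ℤ)) - (bA1 (d₁₃:ℤ) (d₁₄:ℤ) (d₂₄:ℤ) (d₃₂:ℤ) (d₄₂:ℤ) (d₄₃:ℤ))) - (m:ℤ) := by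
      rintro ⟨s, _, hs⟩
      have hsnn : (0:ℤ) ≤ (s:ℤ) := by positivity
      linarith only [hs, hsnn, hmZ]
    obtain ⟨s, hsS, hsm⟩ := (master (m:ℤ)).mpr h2
    have : s = m := by exact_mod_cast hsm
    rwa [this] at hsS
  · -- the symmetry condition
    intro z
    have hcast : ((((((d₃₂:ℤ)+(d₄₂:ℤ))-1) * (bA2 (d₁₃:ℤ) (d₁₄:ℤ) (d₂₁:ℤ) (d₂₄:ℤ) (d₃₁:ℤ) (d₄₃:ℤ)) + (((d₁₃:ℤ)+(d₄₃:ℤ))-1) * (bA3 (d₁₄:ℤ) (d₂₁:ℤ) (d₂₄:ℤ) (d₃₁:ℤ) (d₃₂:ℤ) (d₄₂:ℤ)) + (((d₁₄:ℤ))-1) * (bA4 (d₁₃:ℤ) (d₂₁:ℤ) (d₃₁:ℤ) (d₃₂:ℤ) (d₄₂:ℤ) (d₄₃:ℤ)) - (bA1 (d₁₃:ℤ) (d₁₄:ℤ) (d₂₄:ℤ) (d₃₂:ℤ) (d₄₂:ℤ) (d₄₃:ℤ))).toNat : ℕ) : ℤ) = ((((d₃₂:ℤ)+(d₄₂:ℤ))-1)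 * (bA2 (d₁₃:ℤ) (d₁₄:ℤ) (d₂₁:ℤ) (d₂₄:ℤ) (d₃₁:ℤ) (d₄₃:ℤ)) + (((d₁₃:ℤ)+(d₄₃:ℤ))-1) * (bA3 (d₁₄:ℤ) (d₂₁:ℤ) (d₂₄:ℤ) (d₃₁:ℤ) (d₃₂:ℤ) (d₄₂:ℤ)) + (((d₁₄:ℤ))-1) * (bA4 (d₁₃:ℤ) (d₂₁:ℤ) (d₃₁:ℤ) (d₃₂:ℤ) (d₄₂:ℤ) (d₄₃:ℤ)) - (bA1 (d₁₃:ℤ) (d₁₄:ℤ) (d₂₄:ℤ) (d₃₂:ℤ) (d₄₂:ℤ) (d₄₃:ℤ))) :=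
      Int.toNat_of_nonneg (by linarith only [hFpos])
    rw [hcast]
    exact master z
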